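/- arXiv:2104.13782 — 4 statements merged into one kernel-verified Lean document; each statement's English description precedes it below -/
import Mathlib

section
/- Let h : ℝ^m → ℝ be convex and l_h-Lipschitz (equivalently, all subgradients of h have norm at most l_h). Then for any c ∈ ℝ^m and 0 < μ₁ ≤ μ₂, the Moreau envelope ψ(μ) = min_y [h(y) + (1/(2μ))‖y − c‖²] satisfies ψ(μ₁) − ψ(μ₂) ≤ (l_h²/2)(μ₂ − μ₁). -/
open scoped RealInnerProductSpace

/-- The Moreau envelope of an `l_h`-Lipschitz convex function is
`(l_h²/2)`-Lipschitz in the parameter μ. -/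
theorem moreau_envelope_lipschitz_in_mu {m : ℕ}
    (h : EuclideanSpace ℝ (Fin m) → ℝ) (hconv : ConvexOn ℝ Set.univ h)
    (lh : ℝ) (hlip : ∀ x y, |h x - h y| ≤ lh * ‖x - y‖)
    (μ₁ μ₂ : ℝ) (hμ₁ : 0 < μ₁) (hle : μ₁ ≤ μ₂)
    (c p₁ p₂ : EuclideanSpace ℝ (Fin m))
    (hp₁ : IsMinOn (fun y => h y + 1 / (2 * μ₁) * ‖y - c‖ ^ 2) Set.univ p₁)
    (hp₂ : IsMinOn (fun y => h y + 1 / (2 * μ₂) * ‖y - c‖ ^ 2) Set.univ p₂) :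
    (h p₁ + 1 / (2 * μ₁) * ‖p₁ - c‖ ^ 2) - (h p₂ + 1 / (2 * μ₂) * ‖p₂ - c‖ ^ 2)
      ≤ lh ^ 2 / 2 * (μ₂ - μ₁) := by
  have hμ₂ : 0 < μ₂ := hμ₁.trans_le hle
  set t : ℝ := μ₁ / μ₂ with ht
  have ht0 : 0 ≤ t := by positivity
  have ht1 : t ≤ 1 := by
    rw [ht, div_le_one hμ₂]; exact hle
  set y : EuclideanSpace ℝ (Fin m) := t • p₂ + (1 - t) • c with hy
  have hA : h p₁ + 1 / (2 * μ₁) * ‖p₁ - c‖ ^ 2 ≤ h y + 1 / (2 * μ₁) * ‖y - c‖ ^ 2 :=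
    hp₁ (Set.mem_univ y)
  have hyc : y - c = t • (p₂ - c) := by
    rw [hy]; module
  set r : ℝ := ‖p₂ - c‖ with hr
  have hr0 : 0 ≤ r := norm_nonneg _
  have hnorm : ‖y - c‖ = t * r := by
    rw [hyc, norm_smul, Real.norm_eq_abs, abs_of_nonneg ht0]
  have hB : h y ≤ t * h p₂ + (1 - t) * h c :=
    hconv.2 (Set.mem_univ p₂) (Set.mem_univ c) ht0 (by linarith) (by ring)
  have hC : h c - h p₂ ≤ lh * r := by
    have := (abs_le.mp (hlip c p₂)).2
    rwa [norm_sub_rev, ← hr] at this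
  have hBC : h y ≤ h p₂ + (1 - t) * (lh * r) := by
    have hmul : (1 - t) * (h c - h p₂) ≤ (1 - t) * (lh * r) :=
      mul_le_mul_of_nonneg_left hC (by linarith)
    nlinarith [hB]
  have hcoef : 1 / (2 * μ₁) * ‖y - c‖ ^ 2 = μ₁ / (2 * μ₂ ^ 2) * r ^ 2 := by
    rw [hnorm, ht]
    field_simp
  have hfin : (1 - μ₁ / μ₂) * (lh * r) + (μ₁ / (2 * μ₂ ^ 2) - 1 / (2 * μ₂)) * r ^ 2
      ≤ lh ^ 2 / 2 * (μ₂ - μ₁) := by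
    rw [← sub_nonneg]
    have heq : lh ^ 2 / 2 * (μ₂ - μ₁)
        - ((1 - μ₁ / μ₂) * (lh * r) + (μ₁ / (2 * μ₂ ^ 2) - 1 / (2 * μ₂)) * r ^ 2)
        = (μ₂ - μ₁) * (lh * μ₂ - r) ^ 2 / (2 * μ₂ ^ 2) := by
      field_simp
      ring
    rw [heq]
    exact div_nonneg (mul_nonneg (by linarith) (sq_nonneg _)) (by positivity)
  rw [hcoef] at hA
  linarith [hA, hBC, hfin]
end

section
/- Let f : ℝ^n → ℝ be differentiable with bounded gradient ‖∇f‖ ≤ l_f, let h : ℝ^m → ℝ be convex and l_h-Lipschitz, A ∈ ℝ^{m×n}, b ∈ ℝ^m, μ > 0. Define G(x) = f(x) + h(v) + (1/(2μ))‖Ax − b − v‖² where v = P_μ(Ax − b). Then G is differentiable with ∇G(x) = ∇f(x) + (1/μ)Aᵀ(Ax − b − v), and ‖∇G(x)‖ ≤ l_f + l_h‖A‖ for all x. -/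
open scoped RealInnerProductSpace

section Aux

variable {E : Type*} [NormedAddCommGroup E] [InnerProductSpace ℝ E]

lemma prox_subgrad (h : E → ℝ) (hconv : ConvexOn ℝ Set.univ h) {μ : ℝ} (hμ : 0 < μ)
    (c w : E) (hmin : IsMinOn (fun y => h y + 1 / (2 * μ) * ‖y - c‖ ^ 2) Set.univ w)
    (y : E) : ⟪c - w, y - w⟫ ≤ μ * (h y - h w) := by
  by_contra hX
  push_neg at hX
  set X : ℝ := μ * (h y - h w) - ⟪c - w, y - w⟫ with hXd
  have hXneg : X < 0 := by simp only [hXd]; linarith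
  set C : ℝ := ‖y - w‖ ^ 2 / 2 with hCd
  have hC0 : 0 ≤ C := by positivity
  have h01 : (0:ℝ) < -X := by linarith
  have h02 : (0:ℝ) < 2 * (C + 1) := by linarith
  set t : ℝ := min 1 (-X / (2 * (C + 1))) with htd
  have ht0 : 0 < t := lt_min one_pos (div_pos h01 h02)
  have ht1 : t ≤ 1 := min_le_left _ _
  have ht2 : t ≤ -X / (2 * (C + 1)) := min_le_right _ _
  -- minimality
  have h1 : h w + 1 / (2 * μ) * ‖w - c‖ ^ 2
      ≤ h (w + t • (y - w)) + 1 / (2 * μ) * ‖w + t • (y - w) - c‖ ^ 2 :=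
    hmin (Set.mem_univ (w + t • (y - w)))
  have hcv : h (w + t • (y - w)) ≤ (1 - t) * h w + t * h y := by
    have := hconv.2 (Set.mem_univ w) (Set.mem_univ y)
      (show (0:ℝ) ≤ 1 - t by linarith) ht0.le (by ring)
    have heq : (1 - t) • w + t • y = w + t • (y - w) := by
      rw [smul_sub, sub_smul, one_smul]; abel
    rw [heq, smul_eq_mul, smul_eq_mul] at this
    exact this
  have hns : ‖w + t • (y - w) - c‖ ^ 2
      = ‖w - c‖ ^ 2 + 2 * (t * ⟪w - c, y - w⟫) + t ^ 2 * ‖y - w‖ ^ 2 := by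
    have heq : w + t • (y - w) - c = (w - c) + t • (y - w) := by abel
    rw [heq, norm_add_sq_real, real_inner_smul_right, norm_smul, Real.norm_eq_abs,
      mul_pow, sq_abs]
  have hI : ⟪w - c, y - w⟫ = -⟪c - w, y - w⟫ := by
    rw [show w - c = -(c - w) by abel, inner_neg_left]
  rw [hns, hI] at h1
  set P : ℝ := h y - h w with hPd
  set I : ℝ := ⟪c - w, y - w⟫ with hId
  set N : ℝ := ‖y - w‖ ^ 2 with hNd
  have h2 : 0 ≤ t * P + 1 / (2 * μ) * (2 * (t * -I) + t ^ 2 * N) := by linarith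
  have h3 : 0 ≤ 2 * μ * (t * P + 1 / (2 * μ) * (2 * (t * -I) + t ^ 2 * N)) :=
    mul_nonneg (by linarith) h2
  have h4 : 2 * μ * (t * P + 1 / (2 * μ) * (2 * (t * -I) + t ^ 2 * N))
      = 2 * t * (X + t * C) := by
    simp only [hXd, hCd, hPd, hId, hNd]
    field_simp
    ring
  rw [h4] at h3
  have hO : 0 ≤ X + t * C := by
    by_contra hc
    push_neg at hc
    nlinarith
  have h5 : t * (C + 1) ≤ -X / 2 := by
    calc t * (C + 1) ≤ -X / (2 * (C + 1)) * (C + 1) :=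
          mul_le_mul_of_nonneg_right ht2 (by linarith)
      _ = -X / 2 := by field_simp
  nlinarith

lemma env_sandwich (h : E → ℝ) (hconv : ConvexOn ℝ Set.univ h) {μ : ℝ} (hμ : 0 < μ)
    (c c' w w' : E)
    (hm : IsMinOn (fun y => h y + 1 / (2 * μ) * ‖y - c‖ ^ 2) Set.univ w)
    (hm' : IsMinOn (fun y => h y + 1 / (2 * μ) * ‖y - c'‖ ^ 2) Set.univ w') :
    |(h w' + 1 / (2 * μ) * ‖w' - c'‖ ^ 2) - (h w + 1 / (2 * μ) * ‖w - c‖ ^ 2)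
      - 1 / μ * ⟪c - w, c' - c⟫| ≤ 1 / (2 * μ) * ‖c' - c‖ ^ 2 := by
  have hKμ : (0:ℝ) < 1 / (2 * μ) := by positivity
  -- upper bound : minimality of w' at c', tested at w
  have hup : h w' + 1 / (2 * μ) * ‖w' - c'‖ ^ 2 ≤ h w + 1 / (2 * μ) * ‖w - c'‖ ^ 2 :=
    hm' (Set.mem_univ w)
  have hexp1 : ‖w - c'‖ ^ 2 = ‖w - c‖ ^ 2 + 2 * ⟪c - w, c' - c⟫ + ‖c' - c‖ ^ 2 := by
    rw [show w - c' = (w - c) + (-(c' - c)) by abel, norm_add_sq_real, norm_neg,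
      inner_neg_right, show w - c = -(c - w) by abel, inner_neg_left]
    ring
  -- lower bound : minimality of w at c, tested at w'
  have hlo : h w + 1 / (2 * μ) * ‖w - c‖ ^ 2 ≤ h w' + 1 / (2 * μ) * ‖w' - c‖ ^ 2 :=
    hm (Set.mem_univ w')
  have hexp2 : ‖w' - c‖ ^ 2 = ‖w' - c'‖ ^ 2 + 2 * ⟪w' - c', c' - c⟫ + ‖c' - c‖ ^ 2 := by
    rw [show w' - c = (w' - c') + (c' - c) by abel, norm_add_sq_real]
  -- firm nonexpansiveness
  have hg := prox_subgrad h hconv hμ c w hm w'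
  have hg' := prox_subgrad h hconv hμ c' w' hm' w
  have hde : ‖w' - w‖ ^ 2 ≤ ⟪c' - c, w' - w⟫ := by
    have h2' : -⟪c' - w', w' - w⟫ ≤ μ * (h w - h w') := by
      rw [← inner_neg_right, show -(w' - w) = w - w' by abel]; exact hg'
    have hsplit : ⟪c' - w', w' - w⟫
        = ⟪c - w, w' - w⟫ + ⟪c' - c, w' - w⟫ - ‖w' - w‖ ^ 2 := by
      rw [← real_inner_self_eq_norm_sq,
        show c' - w' = (c - w) + ((c' - c) - (w' - w)) by abel]
      simp only [inner_add_left, inner_sub_left]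
      ring
    linarith [hg, h2', hsplit]
  have hkey : ⟪w' - c', c' - c⟫ + ⟪c - w, c' - c⟫ ≤ 0 := by
    have hsplit2 : ⟪w' - c', c' - c⟫
        = ⟪w - c, c' - c⟫ + ⟪w' - w, c' - c⟫ - ‖c' - c‖ ^ 2 := by
      rw [← real_inner_self_eq_norm_sq,
        show w' - c' = (w - c) + ((w' - w) - (c' - c)) by abel]
      simp only [inner_add_left, inner_sub_left]
      ring
    have hwc : ⟪w - c, c' - c⟫ = -⟪c - w, c' - c⟫ := by
      rw [show w - c = -(c - w) by abel, inner_neg_left]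
    have hdc : ⟪w' - w, c' - c⟫ ≤ ‖c' - c‖ ^ 2 := by
      have hcs := real_inner_le_norm (c' - c) (w' - w)
      rw [real_inner_comm]
      nlinarith [hde, hcs, norm_nonneg (w' - w), norm_nonneg (c' - c),
        sq_nonneg (‖c' - c‖ - ‖w' - w‖)]
    linarith
  rw [abs_le]
  rw [hexp1] at hup
  rw [hexp2] at hlo
  have hinv : 1 / μ = 2 * (1 / (2 * μ)) := by field_simp
  constructor
  · rw [hinv]
    nlinarith [hlo, hkey, hKμ]
  · rw [hinv]
    nlinarith [hup, hKμ]

end Aux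

set_option maxHeartbeats 1000000 in
/-- Gradient formula and gradient bound for the smoothed function
`G(x) = f(x) + h(v(x)) + (1/(2μ))‖Ax − b − v(x)‖²`, where `v(x) = P_μ(Ax − b)`. -/
theorem smoothed_function_gradient {n m : ℕ}
    (f : EuclideanSpace ℝ (Fin n) → ℝ)
    (gf : EuclideanSpace ℝ (Fin n) → EuclideanSpace ℝ (Fin n))
    (hgf : ∀ x, HasGradientAt f (gf x) x)
    (lf : ℝ) (hlf : ∀ x, ‖gf x‖ ≤ lf)
    (h : EuclideanSpace ℝ (Fin m) → ℝ) (hconv : ConvexOn ℝ Set.univ h)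
    (lh : ℝ) (hlh : ∀ x y, |h x - h y| ≤ lh * ‖x - y‖)
    (A : EuclideanSpace ℝ (Fin n) →L[ℝ] EuclideanSpace ℝ (Fin m))
    (b : EuclideanSpace ℝ (Fin m)) (μ : ℝ) (hμ : 0 < μ)
    (v : EuclideanSpace ℝ (Fin n) → EuclideanSpace ℝ (Fin m))
    (hv : ∀ x, IsMinOn (fun y => h y + 1 / (2 * μ) * ‖y - (A x - b)‖ ^ 2) Set.univ (v x)) :
    ∀ x, HasGradientAt
        (fun z => f z + h (v z) + 1 / (2 * μ) * ‖A z - b - v z‖ ^ 2)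
        (gf x + (1 / μ) • (ContinuousLinearMap.adjoint A) (A x - b - v x)) x ∧
      ‖gf x + (1 / μ) • (ContinuousLinearMap.adjoint A) (A x - b - v x)‖ ≤ lf + lh * ‖A‖ := by
  intro x
  have hμ2 : (0:ℝ) < 1 / (2 * μ) := by positivity
  set c : EuclideanSpace ℝ (Fin m) := A x - b with hcd
  set w : EuclideanSpace ℝ (Fin m) := v x with hwd
  -- the inner product identity
  have hinner : ∀ z : EuclideanSpace ℝ (Fin n),
      ⟪(1 / μ) • (ContinuousLinearMap.adjoint A) (c - w), z - x⟫
        = 1 / μ * ⟪c - w, (A z - b) - c⟫ := by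
    intro z
    rw [real_inner_smul_left, ContinuousLinearMap.adjoint_inner_left]
    congr 2
    rw [map_sub, hcd]
    abel
  constructor
  · -- gradient
    rw [hasGradientAt_iff_isLittleO]
    have h1 := hgf x
    rw [hasGradientAt_iff_isLittleO] at h1
    set q : EuclideanSpace ℝ (Fin n) :=
      (1 / μ) • (ContinuousLinearMap.adjoint A) (c - w) with hqd
    have h2 : (fun z => (h (v z) + 1 / (2 * μ) * ‖A z - b - v z‖ ^ 2)
        - (h w + 1 / (2 * μ) * ‖A x - b - w‖ ^ 2) - ⟪q, z - x⟫)
        =o[nhds x] fun z => z - x := by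
      have hq : ∀ z, |(h (v z) + 1 / (2 * μ) * ‖A z - b - v z‖ ^ 2)
          - (h w + 1 / (2 * μ) * ‖A x - b - w‖ ^ 2) - ⟪q, z - x⟫|
          ≤ (1 / (2 * μ) * ‖A‖ ^ 2) * ‖z - x‖ ^ 2 := by
        intro z
        have hs := env_sandwich h hconv hμ c (A z - b) w (v z) (hv x) (hv z)
        rw [hinner z]
        rw [norm_sub_rev (A z - b) (v z), norm_sub_rev (A x - b) w]
        have hle : ‖(A z - b) - c‖ ^ 2 ≤ ‖A‖ ^ 2 * ‖z - x‖ ^ 2 := by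
          have h3 : (A z - b) - c = A (z - x) := by rw [map_sub, hcd]; abel
          rw [h3]
          have h4 := A.le_opNorm (z - x)
          nlinarith [norm_nonneg (A (z - x)), norm_nonneg (z - x), norm_nonneg A]
        have := le_trans hs (by nlinarith : 1 / (2 * μ) * ‖(A z - b) - c‖ ^ 2
          ≤ (1 / (2 * μ) * ‖A‖ ^ 2) * ‖z - x‖ ^ 2)
        convert this using 3 <;> rw [hcd]
      rw [Asymptotics.isLittleO_iff]
      intro ε hε
      set K : ℝ := 1 / (2 * μ) * ‖A‖ ^ 2 with hKd
      have hK0 : 0 ≤ K := by positivity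
      filter_upwards [Metric.ball_mem_nhds x (show 0 < ε / (K + 1) by positivity)] with z hz
      have hzx : ‖z - x‖ < ε / (K + 1) := by rwa [Metric.mem_ball, dist_eq_norm] at hz
      have hzx0 : 0 ≤ ‖z - x‖ := norm_nonneg _
      calc ‖(h (v z) + 1 / (2 * μ) * ‖A z - b - v z‖ ^ 2)
            - (h w + 1 / (2 * μ) * ‖A x - b - w‖ ^ 2) - ⟪q, z - x⟫‖
          ≤ K * ‖z - x‖ ^ 2 := by rw [Real.norm_eq_abs]; exact hq z
        _ ≤ ε * ‖z - x‖ := by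
            have h5 : K * ‖z - x‖ ≤ ε := by
              rcases eq_or_lt_of_le hzx0 with h6 | h6
              · rw [← h6, mul_zero]; exact hε.le
              · have := mul_le_mul_of_nonneg_left hzx.le hK0
                have h7 : K * (ε / (K + 1)) ≤ ε := by
                  rw [div_eq_mul_inv]
                  rw [show K * (ε * (K + 1)⁻¹) = ε * (K * (K + 1)⁻¹) by ring]
                  have : K * (K + 1)⁻¹ ≤ 1 := by
                    rw [mul_inv_le_iff₀ (by linarith)]; linarith
                  nlinarith
                linarith
            nlinarith
    have hsum := h1.add h2
    have heq : (fun z => (f z + h (v z) + 1 / (2 * μ) * ‖A z - b - v z‖ ^ 2)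
        - (f x + h w + 1 / (2 * μ) * ‖A x - b - w‖ ^ 2)
        - ⟪gf x + q, z - x⟫)
        = fun z => (f z - f x - ⟪gf x, z - x⟫)
            + ((h (v z) + 1 / (2 * μ) * ‖A z - b - v z‖ ^ 2)
              - (h w + 1 / (2 * μ) * ‖A x - b - w‖ ^ 2) - ⟪q, z - x⟫) := by
      funext z
      rw [inner_add_left]
      ring
    rw [show (A x - b : EuclideanSpace ℝ (Fin m)) = c from rfl]
    exact heq ▸ hsum
  · -- norm bound
    set g₀ : EuclideanSpace ℝ (Fin m) := (1 / μ) • (c - w) with hg₀d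
    have hb2 : ‖g₀‖ ^ 2 ≤ lh * ‖g₀‖ := by
      have h1 := prox_subgrad h hconv hμ c w (hv x) (w + g₀)
      rw [add_sub_cancel_left] at h1
      have h2 : h (w + g₀) - h w ≤ lh * ‖w + g₀ - w‖ :=
        le_trans (le_abs_self _) (hlh _ _)
      rw [add_sub_cancel_left] at h2
      have h3 : ‖g₀‖ ^ 2 = 1 / μ * ⟪c - w, g₀⟫ := by
        rw [← real_inner_self_eq_norm_sq, hg₀d, real_inner_smul_left]
      have h4 : 1 / μ * ⟪c - w, g₀⟫ ≤ h (w + g₀) - h w := by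
        rw [one_div, inv_mul_le_iff₀ hμ]
        exact h1
      rw [h3]
      linarith
    have hAnonneg : (0:ℝ) ≤ lh * ‖A‖ := by
      rcases Nat.eq_zero_or_pos m with hm0 | hm0
      · subst hm0
        have hA0 : A = 0 := by
          ext z i
          exact absurd i.2 (by omega)
        rw [hA0]
        simp
      · have hlh0 : 0 ≤ lh := by
          have h1 := hlh (EuclideanSpace.single (⟨0, hm0⟩ : Fin m) (1:ℝ)) 0
          rw [sub_zero, EuclideanSpace.norm_single, norm_one, mul_one] at h1
          exact le_trans (abs_nonneg _) h1
        exact mul_nonneg hlh0 (norm_nonneg _)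
    have hadj : ‖(ContinuousLinearMap.adjoint A) g₀‖ ≤ ‖A‖ * ‖g₀‖ := by
      have h5 := (ContinuousLinearMap.adjoint A).le_opNorm g₀
      have h6 : ‖ContinuousLinearMap.adjoint A‖ = ‖A‖ :=
        ContinuousLinearMap.adjoint.norm_map A
      rwa [h6] at h5
    have hterm : ‖(ContinuousLinearMap.adjoint A) g₀‖ ≤ lh * ‖A‖ := by
      by_cases hz : g₀ = 0
      · rw [hz, map_zero, norm_zero]
        exact hAnonneg
      · have hn : 0 < ‖g₀‖ := norm_pos_iff.mpr hz
        have hg : ‖g₀‖ ≤ lh := by nlinarith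
        calc ‖(ContinuousLinearMap.adjoint A) g₀‖ ≤ ‖A‖ * ‖g₀‖ := hadj
          _ ≤ ‖A‖ * lh := mul_le_mul_of_nonneg_left hg (norm_nonneg _)
          _ = lh * ‖A‖ := mul_comm _ _
    have hsm : (1 / μ) • (ContinuousLinearMap.adjoint A) (c - w)
        = (ContinuousLinearMap.adjoint A) g₀ := by
      rw [hg₀d, map_smul]
    calc ‖gf x + (1 / μ) • (ContinuousLinearMap.adjoint A) (c - w)‖
        ≤ ‖gf x‖ + ‖(ContinuousLinearMap.adjoint A) g₀‖ := by
          rw [hsm]; exact norm_add_le _ _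
      _ ≤ lf + lh * ‖A‖ := add_le_add (hlf x) hterm
end

section
/- Suppose a nonnegative sequence {Δ_t} satisfies Δ_{t+1} ≤ ((Q₁ + t − 1)/(Q₁ + t)) Δ_t + Q₂ / (t √t) for all t ≥ 1, where Q₁ ≥ 1 and Q₂ ≥ 0. Then for all t ≥ 1: Δ_t ≤ (Q₁/t) Δ_1 + 2 Q₂ (Q₁ + 1) / √t. -/
open Real

/-- Recursion bound from Theorem 2(ii): if
`Δ_{t+1} ≤ ((Q₁+t−1)/(Q₁+t)) Δ_t + Q₂/(t√t)` for `t ≥ 1`, then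
`Δ_t ≤ (Q₁/t) Δ_1 + 2Q₂(Q₁+1)/√t`. -/
theorem diminishing_recursion_bound (Δ : ℕ → ℝ) (Q₁ Q₂ : ℝ)
    (hΔ : ∀ t, 0 ≤ Δ t) (hQ₁ : 1 ≤ Q₁) (hQ₂ : 0 ≤ Q₂)
    (hrec : ∀ t : ℕ, 1 ≤ t →
      Δ (t + 1) ≤ (Q₁ + (t : ℝ) - 1) / (Q₁ + (t : ℝ)) * Δ t + Q₂ / ((t : ℝ) * Real.sqrt t)) :
    ∀ t : ℕ, 1 ≤ t →
      Δ t ≤ Q₁ / (t : ℝ) * Δ 1 + 2 * Q₂ * (Q₁ + 1) / Real.sqrt t := by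
  -- Key invariant: (Q₁+t-1) Δ_t ≤ Q₁ Δ₁ + 2Q₂(Q₁+1)√(t-1)
  have aux : ∀ t : ℕ, 1 ≤ t →
      (Q₁ + (t : ℝ) - 1) * Δ t ≤ Q₁ * Δ 1 + 2 * Q₂ * (Q₁ + 1) * Real.sqrt ((t : ℝ) - 1) := by
    intro t ht
    induction t, ht using Nat.le_induction with
    | base => simp
    | succ t ht ih =>
      have htR : (1 : ℝ) ≤ (t : ℝ) := by exact_mod_cast ht
      have htpos : (0 : ℝ) < (t : ℝ) := by linarith
      have hs : Real.sqrt t * Real.sqrt t = (t : ℝ) := Real.mul_self_sqrt htpos.le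
      have hs1 : (1 : ℝ) ≤ Real.sqrt t := by
        rw [show (1:ℝ) = Real.sqrt 1 by simp]; exact Real.sqrt_le_sqrt htR
      have hspos : (0 : ℝ) < Real.sqrt t := by linarith
      have hQt : (0 : ℝ) < Q₁ + (t : ℝ) := by linarith
      have hrec' := hrec t ht
      -- multiply the recursion by (Q₁+t)
      have h1 : (Q₁ + (t : ℝ)) * Δ (t + 1) ≤
          (Q₁ + (t : ℝ) - 1) * Δ t + (Q₁ + (t : ℝ)) * (Q₂ / ((t : ℝ) * Real.sqrt t)) := by
        have := mul_le_mul_of_nonneg_left hrec' hQt.le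
        calc (Q₁ + (t : ℝ)) * Δ (t + 1) ≤
            (Q₁ + (t : ℝ)) * ((Q₁ + (t : ℝ) - 1) / (Q₁ + (t : ℝ)) * Δ t
              + Q₂ / ((t : ℝ) * Real.sqrt t)) := this
          _ = (Q₁ + (t : ℝ) - 1) * Δ t + (Q₁ + (t : ℝ)) * (Q₂ / ((t : ℝ) * Real.sqrt t)) := by
              field_simp
      -- bound the noise term
      have h2 : (Q₁ + (t : ℝ)) * (Q₂ / ((t : ℝ) * Real.sqrt t)) ≤ Q₂ * (Q₁ + 1) / Real.sqrt t := by
        rw [show (Q₁ + (t : ℝ)) * (Q₂ / ((t : ℝ) * Real.sqrt t))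
            = (Q₁ + (t : ℝ)) * Q₂ / ((t : ℝ) * Real.sqrt t) by rw [mul_div_assoc],
          div_le_div_iff₀ (by positivity) hspos]
        have hA : (Q₁ + (t:ℝ)) * Q₂ ≤ Q₂ * (Q₁ + 1) * t := by
          nlinarith [mul_nonneg (mul_nonneg hQ₂ (by linarith : (0:ℝ) ≤ Q₁))
            (by linarith : (0:ℝ) ≤ (t:ℝ) - 1)]
        nlinarith [mul_le_mul_of_nonneg_right hA hspos.le]
      -- sqrt step: 2√(t-1) + 1/√t ≤ 2√t
      have hs' : Real.sqrt ((t:ℝ) - 1) * Real.sqrt ((t:ℝ) - 1) = (t:ℝ) - 1 :=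
        Real.mul_self_sqrt (by linarith)
      have hle : Real.sqrt ((t:ℝ) - 1) ≤ Real.sqrt t := Real.sqrt_le_sqrt (by linarith)
      have h3 : 2 * Real.sqrt ((t:ℝ) - 1) + 1 / Real.sqrt t ≤ 2 * Real.sqrt t := by
        have hsub : 1 / Real.sqrt t ≤ 2 * (Real.sqrt t - Real.sqrt ((t:ℝ) - 1)) := by
          rw [div_le_iff₀ hspos]
          nlinarith [hs, hs', hle, mul_nonneg (sub_nonneg.2 hle) hspos.le,
            Real.sqrt_nonneg ((t:ℝ) - 1)]
        linarith
      have hcast : ((t : ℕ) + 1 : ℝ) - 1 = (t : ℝ) := by push_cast; ring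
      calc (Q₁ + ((t + 1 : ℕ) : ℝ) - 1) * Δ (t + 1)
          = (Q₁ + (t : ℝ)) * Δ (t + 1) := by push_cast; ring_nf
        _ ≤ (Q₁ + (t : ℝ) - 1) * Δ t + Q₂ * (Q₁ + 1) / Real.sqrt t := by linarith
        _ ≤ Q₁ * Δ 1 + 2 * Q₂ * (Q₁ + 1) * Real.sqrt ((t:ℝ) - 1)
              + Q₂ * (Q₁ + 1) / Real.sqrt t := by linarith
        _ ≤ Q₁ * Δ 1 + 2 * Q₂ * (Q₁ + 1) * Real.sqrt (((t+1 : ℕ) : ℝ) - 1) := by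
              push_cast
              rw [show ((t:ℝ) + 1 - 1) = (t:ℝ) by ring]
              have hB : (0:ℝ) ≤ Q₂ * (Q₁ + 1) := mul_nonneg hQ₂ (by linarith)
              have h4 := mul_le_mul_of_nonneg_left h3 hB
              rw [mul_add, mul_one_div] at h4
              linarith
  intro t ht
  have htR : (1 : ℝ) ≤ (t : ℝ) := by exact_mod_cast ht
  have htpos : (0 : ℝ) < (t : ℝ) := by linarith
  have hs : Real.sqrt t * Real.sqrt t = (t : ℝ) := Real.mul_self_sqrt htpos.le
  have hspos : (0 : ℝ) < Real.sqrt t := Real.sqrt_pos.mpr htpos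
  have hle : Real.sqrt ((t:ℝ) - 1) ≤ Real.sqrt t := Real.sqrt_le_sqrt (by linarith)
  have key : (t : ℝ) * Δ t ≤ Q₁ * Δ 1 + 2 * Q₂ * (Q₁ + 1) * Real.sqrt t := by
    have h := aux t ht
    have : (t : ℝ) * Δ t ≤ (Q₁ + (t : ℝ) - 1) * Δ t :=
      mul_le_mul_of_nonneg_right (by linarith) (hΔ t)
    have h2 : 2 * Q₂ * (Q₁ + 1) * Real.sqrt ((t:ℝ) - 1) ≤ 2 * Q₂ * (Q₁ + 1) * Real.sqrt t :=
      mul_le_mul_of_nonneg_left hle (by positivity)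
    linarith
  have key' : Δ t ≤ (Q₁ * Δ 1 + 2 * Q₂ * (Q₁ + 1) * Real.sqrt t) / (t : ℝ) := by
    rw [le_div_iff₀ htpos]
    nlinarith [key]
  have e1 : 2 * Q₂ * (Q₁ + 1) / Real.sqrt t = 2 * Q₂ * (Q₁ + 1) * Real.sqrt t / (t : ℝ) := by
    rw [div_eq_div_iff (ne_of_gt hspos) (ne_of_gt htpos)]
    linear_combination (-2) * Q₂ * (Q₁ + 1) * hs
  rw [e1, div_mul_eq_mul_div, ← add_div]
  exact key'
end

section
/- Let R : ℝ^n → ℝ be differentiable and σ-strongly convex, θ > 0, and suppose x⁺ satisfies R(x⁺) + (θ/2)‖x⁺ − x‖² ≤ R(x) (sufficient decrease from a proximal-type update). Then ‖x⁺ − x‖ ≤ (2/(σ + θ))‖∇R(x)‖. -/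
open scoped RealInnerProductSpace

/-- Lemma 6: if `R` is σ-strongly convex and differentiable, `θ > 0`, and `x⁺`
satisfies the sufficient decrease `R(x⁺) + (θ/2)‖x⁺ − x‖² ≤ R(x)`, then
`‖x⁺ − x‖ ≤ (2/(σ+θ))‖∇R(x)‖`. -/
theorem sufficient_decrease_step_bound {n : ℕ}
    (R : EuclideanSpace ℝ (Fin n) → ℝ)
    (gR : EuclideanSpace ℝ (Fin n) → EuclideanSpace ℝ (Fin n))
    (hgR : ∀ z, HasGradientAt R (gR z) z)
    (σ θ : ℝ) (hσ : 0 < σ) (hθ : 0 < θ)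
    (hsc : ∀ a b, R a + ⟪gR a, b - a⟫ + σ / 2 * ‖b - a‖ ^ 2 ≤ R b)
    (x xplus : EuclideanSpace ℝ (Fin n))
    (hdec : R xplus + θ / 2 * ‖xplus - x‖ ^ 2 ≤ R x) :
    ‖xplus - x‖ ≤ 2 / (σ + θ) * ‖gR x‖ := by
  have h1 := hsc x xplus
  have hkey : (σ + θ) / 2 * ‖xplus - x‖ ^ 2 ≤ -⟪gR x, xplus - x⟫ := by
    nlinarith [h1, hdec]
  have hcs : -⟪gR x, xplus - x⟫ ≤ ‖gR x‖ * ‖xplus - x‖ := by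
    have := abs_real_inner_le_norm (gR x) (xplus - x)
    cases abs_cases (⟪gR x, xplus - x⟫) with
    | inl h => linarith [real_inner_le_norm (gR x) (xplus - x), norm_nonneg (gR x), norm_nonneg (xplus - x), mul_nonneg (norm_nonneg (gR x)) (norm_nonneg (xplus - x))]
    | inr h => linarith
  have hpos : 0 < σ + θ := by linarith
  rcases eq_or_lt_of_le (norm_nonneg (xplus - x)) with h0 | h0
  · rw [← h0]
    positivity
  · rw [div_mul_eq_mul_div, le_div_iff₀ hpos]
    nlinarith [hkey, hcs]
end
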